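/- With W⁽¹⁾(ρ₁,ρ₂) = -(1/(2π)) cot(π(ρ₁+ρ₂)) sin²(πρ₂) - ρ₂/4 + (1/(4π)) sin(2πρ₂) and W⁽²⁾(ρ₁,ρ₂) = W⁽¹⁾(ρ₂,ρ₁), the determinant of the Jacobian matrix H_W(ρ) equals (1/(64 sin³(π(ρ₁+ρ₂)))) · {5 sin(π(ρ₁+ρ₂)) + sin(3π(ρ₁+ρ₂)) - 2 sin(π(3ρ₁+ρ₂)) - 2 sin(π(ρ₁+3ρ₂))} for all ρ in the open triangle T. -/

import Mathlib

open Real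

/-- First component of the vector field `W`. -/
noncomputable def W1 (ρ₁ ρ₂ : ℝ) : ℝ :=
  -(1 / (2 * π)) * Real.cot (π * (ρ₁ + ρ₂)) * (Real.sin (π * ρ₂)) ^ 2
    - ρ₂ / 4 + (1 / (4 * π)) * Real.sin (2 * π * ρ₂)

/-- Second component of the vector field `W`. -/
noncomputable def W2 (ρ₁ ρ₂ : ℝ) : ℝ := W1 ρ₂ ρ₁

-- derivative in first variable
lemma hd1 (t c : ℝ) (hs : Real.sin (π * (t + c)) ≠ 0) :
    HasDerivAt (fun a => W1 a c)
      ((Real.sin (π * c)) ^ 2 / (2 * (Real.sin (π * (t + c))) ^ 2)) t := by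
  have hπ : (π : ℝ) ≠ 0 := Real.pi_ne_zero
  have h1 : HasDerivAt (fun a : ℝ => π * (a + c)) π t := by
    simpa using (((hasDerivAt_id t).add_const c).const_mul π)
  have hcos : HasDerivAt (fun a : ℝ => Real.cos (π * (a + c)))
      (-Real.sin (π * (t + c)) * π) t := (Real.hasDerivAt_cos _).comp t h1
  have hsin : HasDerivAt (fun a : ℝ => Real.sin (π * (a + c)))
      (Real.cos (π * (t + c)) * π) t := (Real.hasDerivAt_sin _).comp t h1
  have hcot : HasDerivAt (fun a : ℝ => Real.cos (π * (a + c)) / Real.sin (π * (a + c)))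
      ((-Real.sin (π * (t + c)) * π * Real.sin (π * (t + c))
        - Real.cos (π * (t + c)) * (Real.cos (π * (t + c)) * π)) / (Real.sin (π * (t + c))) ^ 2)
      t := hcos.div hsin hs
  have := ((hcot.const_mul (-(1 / (2 * π)))).mul_const ((Real.sin (π * c)) ^ 2)).sub_const (c / 4)
  have h2 := this.add_const ((1 / (4 * π)) * Real.sin (2 * π * c))
  have heq : (fun a => W1 a c) = fun a =>
      -(1 / (2 * π)) * (Real.cos (π * (a + c)) / Real.sin (π * (a + c))) * (Real.sin (π * c)) ^ 2
        - c / 4 + (1 / (4 * π)) * Real.sin (2 * π * c) := by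
    funext a; simp [W1, Real.cot_eq_cos_div_sin]
  rw [heq]
  refine (h2.congr_deriv ?_).congr_deriv rfl; symm
  have hpyth := Real.sin_sq_add_cos_sq (π * (t + c))
  field_simp
  linear_combination (-Real.sin (π*c)^2) * hpyth

-- derivative in second variable
lemma hd2 (c t : ℝ) (hs : Real.sin (π * (c + t)) ≠ 0) :
    HasDerivAt (fun b => W1 c b)
      ((Real.sin (π * t)) ^ 2 / (2 * (Real.sin (π * (c + t))) ^ 2)
        - (Real.cos (π * (c + t)) / Real.sin (π * (c + t))) * Real.sin (π * t) * Real.cos (π * t)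
        - 1 / 4 + Real.cos (2 * π * t) / 2) t := by
  have hπ : (π : ℝ) ≠ 0 := Real.pi_ne_zero
  have h1 : HasDerivAt (fun b : ℝ => π * (c + b)) π t := by
    simpa using (((hasDerivAt_id t).const_add c).const_mul π)
  have hcos : HasDerivAt (fun b : ℝ => Real.cos (π * (c + b)))
      (-Real.sin (π * (c + t)) * π) t := (Real.hasDerivAt_cos _).comp t h1
  have hsin : HasDerivAt (fun b : ℝ => Real.sin (π * (c + b)))
      (Real.cos (π * (c + t)) * π) t := (Real.hasDerivAt_sin _).comp t h1
  have hcot : HasDerivAt (fun b : ℝ => Real.cos (π * (c + b)) / Real.sin (π * (c + b)))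
      ((-Real.sin (π * (c + t)) * π * Real.sin (π * (c + t))
        - Real.cos (π * (c + t)) * (Real.cos (π * (c + t)) * π)) / (Real.sin (π * (c + t))) ^ 2)
      t := hcos.div hsin hs
  have hb : HasDerivAt (fun b : ℝ => π * b) π t := by
    simpa using (hasDerivAt_id t).const_mul π
  have hsinb : HasDerivAt (fun b : ℝ => Real.sin (π * b)) (Real.cos (π * t) * π) t :=
    (Real.hasDerivAt_sin _).comp t hb
  have hsq : HasDerivAt (fun b : ℝ => (Real.sin (π * b)) ^ 2)
      (2 * (Real.sin (π * t)) ^ 1 * (Real.cos (π * t) * π)) t := by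
    simpa using hsinb.fun_pow 2
  have hprod := ((hcot.mul hsq).const_mul (-(1 / (2 * π))))
  have h2b : HasDerivAt (fun b : ℝ => 2 * π * b) (2 * π) t := by
    simpa using (hasDerivAt_id t).const_mul (2 * π)
  have hsin2 : HasDerivAt (fun b : ℝ => Real.sin (2 * π * b)) (Real.cos (2 * π * t) * (2 * π)) t :=
    (Real.hasDerivAt_sin _).comp t h2b
  have hlast := hsin2.const_mul (1 / (4 * π))
  have hdiv4 : HasDerivAt (fun b : ℝ => b / 4) (1 / 4) t := by
    simpa using (hasDerivAt_id t).div_const 4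
  have h2 := (hprod.sub hdiv4).add hlast
  have heq : (fun b => W1 c b) = fun b =>
      -(1 / (2 * π)) * (Real.cos (π * (c + b)) / Real.sin (π * (c + b)) * (Real.sin (π * b)) ^ 2)
        - b / 4 + (1 / (4 * π)) * Real.sin (2 * π * b) := by
    funext b; simp [W1, Real.cot_eq_cos_div_sin]; ring
  rw [heq]
  refine (h2.congr_deriv ?_).congr_deriv rfl; symm
  have hpyth := Real.sin_sq_add_cos_sq (π * (c + t))
  field_simp
  linear_combination (-4*Real.sin (π*t)^2) * hpyth

set_option maxHeartbeats 1000000 in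
lemma key (x y : ℝ) (hS : Real.sin (x + y) ≠ 0) :
    (Real.sin y ^ 2 / (2 * Real.sin (x + y) ^ 2)) * (Real.sin x ^ 2 / (2 * Real.sin (x + y) ^ 2))
      - (Real.sin y ^ 2 / (2 * Real.sin (x + y) ^ 2)
          - (Real.cos (x + y) / Real.sin (x + y)) * Real.sin y * Real.cos y
          - 1 / 4 + Real.cos (2 * y) / 2)
        * (Real.sin x ^ 2 / (2 * Real.sin (x + y) ^ 2)
          - (Real.cos (x + y) / Real.sin (x + y)) * Real.sin x * Real.cos x
          - 1 / 4 + Real.cos (2 * x) / 2)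
      = (1 / (64 * Real.sin (x + y) ^ 3))
          * (5 * Real.sin (x + y) + Real.sin (3 * (x + y))
            - 2 * Real.sin (2 * x + (x + y)) - 2 * Real.sin (2 * y + (x + y))) := by
  have h1 := Real.sin_sq_add_cos_sq x
  have h2 := Real.sin_sq_add_cos_sq y
  set S := Real.sin (x + y) with hSdef
  set C := Real.cos (x + y) with hCdef
  have main : 16 * Real.sin x ^ 2 * Real.sin y ^ 2
      - 4 * (2 * Real.sin x ^ 2 - 4 * C * S * Real.sin x * Real.cos x - S ^ 2
              + 2 * S ^ 2 * Real.cos (2 * x))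
          * (2 * Real.sin y ^ 2 - 4 * C * S * Real.sin y * Real.cos y - S ^ 2
              + 2 * S ^ 2 * Real.cos (2 * y))
      = S * (5 * S + Real.sin (3 * (x + y))
            - 2 * Real.sin (2 * x + (x + y)) - 2 * Real.sin (2 * y + (x + y))) := by
    simp only [hSdef, hCdef, Real.sin_three_mul, Real.sin_add, Real.cos_add,
      Real.sin_two_mul, Real.cos_two_mul]
    linear_combination ((-8:ℝ)*Real.sin y^2 + (8:ℝ)*Real.sin y^2*Real.cos y^2 + (8:ℝ)*Real.sin y^4 + (4:ℝ)*Real.cos x^2*Real.sin y^2 + (-16:ℝ)*Real.cos x^2*Real.sin y^4 + (48:ℝ)*Real.cos x^4*Real.sin y^4 + (12:ℝ)*Real.sin x*Real.cos x*Real.sin y*Real.cos y + (-16:ℝ)*Real.sin x*Real.cos x*Real.sin y^3*Real.cos y + (-16:ℝ)*Real.sin x*Real.cos x*Real.sin y^3*Real.cos y^3 + (-16:ℝ)*Real.sin x*Real.cos x*Real.sin y^5*Real.cos y + (144:ℝ)*Real.sin x*Real.cos x^3*Real.sin y^3*Real.cos y + (-64:ℝ)*Real.sin x*Real.cos x^3*Real.sin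 y^3*Real.cos y^3 + (-64:ℝ)*Real.sin x*Real.cos x^3*Real.sin y^5*Real.cos y + (8:ℝ)*Real.sin x^2*Real.cos y^2 + (16:ℝ)*Real.sin x^2*Real.sin y^2 + (-48:ℝ)*Real.sin x^2*Real.sin y^2*Real.cos y^2 + (16:ℝ)*Real.sin x^2*Real.sin y^2*Real.cos y^4 + (-16:ℝ)*Real.sin x^2*Real.sin y^4 + (16:ℝ)*Real.sin x^2*Real.sin y^4*Real.cos y^2 + (144:ℝ)*Real.sin x^2*Real.cos x^2*Real.sin y^2*Real.cos y^2 + (-128:ℝ)*Real.sin x^2*Real.cos x^2*Real.sin y^2*Real.cos y^4 + (-128:ℝ)*Real.sin x^2*Real.cos x^2*Real.sin y^4*Real.cos y^2 + (48:ℝ)*Real.sin x^3*Real.cos x*Real.sin y*Real.cos y^3 + (-64:ℝ)*Real.sin x^3*Real.cos x*Real.sin y*Real.cos y^5 + (-64:ℝ)*Real.sin x^3*Real.cos x*Real.sin y^3*Real.cos y^3) * h1 + ((8:ℝ)*Real.sin y^2 + (12:ℝ)*Real.sin x*Real.cos x*Real.sin y*Real.cos y + (-16:ℝ)*Real.sin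 x*Real.cos x*Real.sin y^3*Real.cos y + (4:ℝ)*Real.sin x^2*Real.cos y^2 + (-24:ℝ)*Real.sin x^2*Real.sin y^2 + (16:ℝ)*Real.sin x^2*Real.sin y^2*Real.cos y^2 + (-32:ℝ)*Real.sin x^3*Real.cos x*Real.sin y*Real.cos y + (80:ℝ)*Real.sin x^3*Real.cos x*Real.sin y*Real.cos y^3 + (16:ℝ)*Real.sin x^3*Real.cos x*Real.sin y^3*Real.cos y + (-16:ℝ)*Real.sin x^4*Real.cos y^2 + (48:ℝ)*Real.sin x^4*Real.cos y^4 + (16:ℝ)*Real.sin x^4*Real.sin y^2 + (-16:ℝ)*Real.sin x^4*Real.sin y^2*Real.cos y^2) * h2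
  have hS4 : (64 : ℝ) * S ^ 4 ≠ 0 := by positivity
  calc (Real.sin y ^ 2 / (2 * S ^ 2)) * (Real.sin x ^ 2 / (2 * S ^ 2))
      - (Real.sin y ^ 2 / (2 * S ^ 2) - (C / S) * Real.sin y * Real.cos y
          - 1 / 4 + Real.cos (2 * y) / 2)
        * (Real.sin x ^ 2 / (2 * S ^ 2) - (C / S) * Real.sin x * Real.cos x
          - 1 / 4 + Real.cos (2 * x) / 2)
      = (16 * Real.sin x ^ 2 * Real.sin y ^ 2
          - 4 * (2 * Real.sin x ^ 2 - 4 * C * S * Real.sin x * Real.cos x - S ^ 2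
                  + 2 * S ^ 2 * Real.cos (2 * x))
              * (2 * Real.sin y ^ 2 - 4 * C * S * Real.sin y * Real.cos y - S ^ 2
                  + 2 * S ^ 2 * Real.cos (2 * y))) / (64 * S ^ 4) := by
        field_simp
        ring
    _ = (S * (5 * S + Real.sin (3 * (x + y))
            - 2 * Real.sin (2 * x + (x + y)) - 2 * Real.sin (2 * y + (x + y)))) / (64 * S ^ 4) := by
        rw [main]
    _ = (1 / (64 * S ^ 3))
          * (5 * S + Real.sin (3 * (x + y))
            - 2 * Real.sin (2 * x + (x + y)) - 2 * Real.sin (2 * y + (x + y))) := by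
        field_simp


/-- The determinant of the Jacobian matrix `H_W(ρ)`. -/
theorem det_HW (ρ₁ ρ₂ : ℝ) (h1 : 0 < ρ₁) (h2 : 0 < ρ₂) (h12 : ρ₁ + ρ₂ < 1) :
    deriv (fun a => W1 a ρ₂) ρ₁ * deriv (fun b => W2 ρ₁ b) ρ₂
      - deriv (fun b => W1 ρ₁ b) ρ₂ * deriv (fun a => W2 a ρ₂) ρ₁
      = (1 / (64 * (Real.sin (π * (ρ₁ + ρ₂))) ^ 3))
          * (5 * Real.sin (π * (ρ₁ + ρ₂)) + Real.sin (3 * π * (ρ₁ + ρ₂))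
            - 2 * Real.sin (π * (3 * ρ₁ + ρ₂)) - 2 * Real.sin (π * (ρ₁ + 3 * ρ₂))) := by
  have hspos : 0 < Real.sin (π * (ρ₁ + ρ₂)) := by
    apply Real.sin_pos_of_pos_of_lt_pi
    · positivity
    · calc π * (ρ₁ + ρ₂) < π * 1 := by
            exact mul_lt_mul_of_pos_left h12 Real.pi_pos
        _ = π := mul_one π
  have hs : Real.sin (π * (ρ₁ + ρ₂)) ≠ 0 := ne_of_gt hspos
  have hs' : Real.sin (π * (ρ₂ + ρ₁)) ≠ 0 := by rwa [add_comm ρ₂ ρ₁]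
  have e1 : deriv (fun a => W1 a ρ₂) ρ₁
      = (Real.sin (π * ρ₂)) ^ 2 / (2 * (Real.sin (π * (ρ₁ + ρ₂))) ^ 2) :=
    (hd1 ρ₁ ρ₂ hs).deriv
  have e2 : deriv (fun b => W2 ρ₁ b) ρ₂
      = (Real.sin (π * ρ₁)) ^ 2 / (2 * (Real.sin (π * (ρ₂ + ρ₁))) ^ 2) := by
    simp only [W2]
    exact (hd1 ρ₂ ρ₁ hs').deriv
  have e3 : deriv (fun b => W1 ρ₁ b) ρ₂
      = (Real.sin (π * ρ₂)) ^ 2 / (2 * (Real.sin (π * (ρ₁ + ρ₂))) ^ 2)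
        - (Real.cos (π * (ρ₁ + ρ₂)) / Real.sin (π * (ρ₁ + ρ₂))) * Real.sin (π * ρ₂) * Real.cos (π * ρ₂)
        - 1 / 4 + Real.cos (2 * π * ρ₂) / 2 :=
    (hd2 ρ₁ ρ₂ hs).deriv
  have e4 : deriv (fun a => W2 a ρ₂) ρ₁
      = (Real.sin (π * ρ₁)) ^ 2 / (2 * (Real.sin (π * (ρ₂ + ρ₁))) ^ 2)
        - (Real.cos (π * (ρ₂ + ρ₁)) / Real.sin (π * (ρ₂ + ρ₁))) * Real.sin (π * ρ₁) * Real.cos (π * ρ₁)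
        - 1 / 4 + Real.cos (2 * π * ρ₁) / 2 := by
    simp only [W2]
    exact (hd2 ρ₂ ρ₁ hs').deriv
  rw [e1, e2, e3, e4]
  have := key (π * ρ₁) (π * ρ₂) (by
    rw [show π * ρ₁ + π * ρ₂ = π * (ρ₁ + ρ₂) by ring]; exact hs)
  rw [show π * (ρ₂ + ρ₁) = π * ρ₁ + π * ρ₂ by ring, show π * (ρ₁ + ρ₂) = π * ρ₁ + π * ρ₂ by ring,
    show 2 * π * ρ₂ = 2 * (π * ρ₂) by ring, show 2 * π * ρ₁ = 2 * (π * ρ₁) by ring,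
    show 3 * π * (ρ₁ + ρ₂) = 3 * (π * ρ₁ + π * ρ₂) by ring,
    show π * (3 * ρ₁ + ρ₂) = 2 * (π * ρ₁) + (π * ρ₁ + π * ρ₂) by ring,
    show π * (ρ₁ + 3 * ρ₂) = 2 * (π * ρ₂) + (π * ρ₁ + π * ρ₂) by ring]
  linarith [this]
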